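/- Assume that the cost per stage g is bounded over X×U×W, that there exists a uniformly proper policy, and that Ĵ = J*. Then J* is the unique solution of Bellman's equation within the set B. -/

import Mathlib

open scoped ENNReal
open Filter
open scoped Classical NNReal

/-- A stochastic shortest path (SSP) problem with state space `X`, control space `U`,
countable disturbance space `W`, a cost-free absorbing termination state `t`,
nonempty control constraint sets `Uc x ⊆ U`, disturbance distributions `P x u`,
system function `f`, and nonnegative (finite-valued) cost per stage `g`. -/
structure SSP (X U W : Type*) [Countable W] where
  t : X
  Uc : X → Set U
  Uc_nonempty : ∀ x, (Uc x).Nonempty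
  P : X → U → PMF W
  f : X → U → W → X
  g : X → U → W → ℝ≥0∞
  g_lt_top : ∀ x u w, g x u w < ⊤
  f_absorb : ∀ u ∈ Uc t, ∀ w, f t u w = t
  g_zero : ∀ u ∈ Uc t, ∀ w, g t u w = 0

namespace SSP

variable {X U W : Type*} [Countable W] (S : SSP X U W)

/-- A policy `π = (μ₀, μ₁, …)` is admissible if `μ_k(x) ∈ U(x)` for all `k, x`. -/
def IsPolicy (π : ℕ → X → U) : Prop := ∀ k x, π k x ∈ S.Uc x

/-- Distribution of the state `x_k` after `k` steps under policy `π` starting from `x₀`. -/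
noncomputable def stateDist (π : ℕ → X → U) (x₀ : X) : ℕ → PMF X
  | 0 => PMF.pure x₀
  | k + 1 => (stateDist π x₀ k).bind fun x => (S.P x (π k x)).map (S.f x (π k x))

/-- Expected value `E^π_{x₀}[J(x_k)]` of a nonnegative function along the trajectory. -/
noncomputable def expect (π : ℕ → X → U) (x₀ : X) (k : ℕ) (J : X → ℝ≥0∞) : ℝ≥0∞ :=
  ∑' x, S.stateDist π x₀ k x * J x

/-- Expected cost `E^π_{x₀}[g(x_k, μ_k(x_k), w_k)]` of the `k`-th stage. -/
noncomputable def stageCost (π : ℕ → X → U) (x₀ : X) (k : ℕ) : ℝ≥0∞ :=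
  S.expect π x₀ k fun x => ∑' w, S.P x (π k x) w * S.g x (π k x) w

/-- The cost `J_π(x₀) = Σ_{k≥0} E^π_{x₀}[g(x_k, μ_k(x_k), w_k)]` of a policy. -/
noncomputable def Jcost (π : ℕ → X → U) (x₀ : X) : ℝ≥0∞ :=
  ∑' k, S.stageCost π x₀ k

/-- `r_k(π, x₀)`: probability that `x_k ≠ t` under `π` starting from `x₀`. -/
noncomputable def r (π : ℕ → X → U) (x₀ : X) (k : ℕ) : ℝ≥0∞ :=
  S.expect π x₀ k fun x => if x = S.t then 0 else 1

/-- `Σ_{k≥0} r_k(π,x₀)`: expected number of steps to reach the destination. -/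
noncomputable def N (π : ℕ → X → U) (x₀ : X) : ℝ≥0∞ := ∑' k, S.r π x₀ k

/-- A policy is proper at `x` if it is admissible, `J_π(x) < ∞` and `Σ_k r_k(π,x) < ∞`. -/
def ProperAt (π : ℕ → X → U) (x : X) : Prop :=
  S.IsPolicy π ∧ S.Jcost π x < ⊤ ∧ S.N π x < ⊤

/-- The optimal cost function `J*`. -/
noncomputable def Jstar (x : X) : ℝ≥0∞ := ⨅ π ∈ {π | S.IsPolicy π}, S.Jcost π x

/-- The restricted optimal cost function `Ĵ` over policies proper at `x`
(infimum over the empty set is `∞`). -/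
noncomputable def Jhat (x : X) : ℝ≥0∞ := ⨅ π ∈ {π | S.ProperAt π x}, S.Jcost π x

/-- The effective domain `X̂ = {x | Ĵ(x) < ∞}` of `Ĵ`. -/
def Xhat : Set X := {x | S.Jhat x < ⊤}

/-- Expected `k`-th stage cost in the `δ`-perturbed problem (stage cost `g + δ` off `t`). -/
noncomputable def stageCostPert (δ : ℝ≥0∞) (π : ℕ → X → U) (x₀ : X) (k : ℕ) : ℝ≥0∞ :=
  S.expect π x₀ k fun x =>
    ∑' w, S.P x (π k x) w * (S.g x (π k x) w + if x = S.t then 0 else δ)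

/-- The cost `J_{π,δ}` of a policy in the `δ`-perturbed problem. -/
noncomputable def Jpert (δ : ℝ≥0∞) (π : ℕ → X → U) (x₀ : X) : ℝ≥0∞ :=
  ∑' k, S.stageCostPert δ π x₀ k

/-- The optimal cost function `Ĵ_δ` of the `δ`-perturbed problem. -/
noncomputable def JhatPert (δ : ℝ≥0∞) (x : X) : ℝ≥0∞ :=
  ⨅ π ∈ {π | S.IsPolicy π}, S.Jpert δ π x

/-- `Q J x u = E_{w∼P(·|x,u)}[g(x,u,w) + J(f(x,u,w))]`. -/
noncomputable def Q (J : X → ℝ≥0∞) (x : X) (u : U) : ℝ≥0∞ :=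
  ∑' w, S.P x u w * (S.g x u w + J (S.f x u w))

/-- The Bellman operator `(TJ)(x) = inf_{u ∈ U(x)} E[g(x,u,w) + J(f(x,u,w))]`. -/
noncomputable def bellman (J : X → ℝ≥0∞) (x : X) : ℝ≥0∞ := ⨅ u ∈ S.Uc x, S.Q J x u

/-- The tail policy `π_k = (μ_k, μ_{k+1}, …)`. -/
def tail (π : ℕ → X → U) (k : ℕ) : ℕ → X → U := fun m => π (k + m)

/-- The set `Ŵ` of functions `J` with `J(t) = 0`, `Ĵ ≤ J`, and
`E^π_{x₀}[J(x_k)] → 0` for every pair `(π, x₀)` with `π` proper at `x₀`. -/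
def What : Set (X → ℝ≥0∞) :=
  {J | J S.t = 0 ∧ S.Jhat ≤ J ∧
    ∀ π x₀, S.ProperAt π x₀ → Tendsto (fun k => S.expect π x₀ k J) atTop (nhds 0)}

/-- The set `B` of functions `J` with `J(t) = 0` that are bounded over `X̂`. -/
def Bset : Set (X → ℝ≥0∞) :=
  {J | J S.t = 0 ∧ (⨆ x ∈ S.Xhat, J x) < ⊤}

/-- A policy is uniformly proper if it is admissible and the expected number of steps
to reach the destination is uniformly bounded over `X̂`. -/
def UniformlyProper (π : ℕ → X → U) : Prop :=
  S.IsPolicy π ∧ (⨆ x ∈ S.Xhat, S.N π x) < ⊤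

/-- The cost per stage `g` is (uniformly) bounded over `X × U × W`. -/
def BoundedCost : Prop := ∃ b : ℝ≥0∞, b < ⊤ ∧ ∀ x u w, S.g x u w ≤ b


/-! ### Auxiliary lemmas -/

lemma lt_top_of_mul_le' {a b c : ℝ≥0∞} (ha : a ≠ 0) (h : a * b ≤ c) (hc : c < ⊤) : b < ⊤ := by
  by_contra hb
  rw [not_lt, top_le_iff] at hb
  subst hb
  rw [ENNReal.mul_top ha] at h
  exact absurd hc (by simp [top_le_iff.1 h])

lemma tsum_pmf_map_mul {α β : Type*} (q : PMF α) (h : α → β) (J : β → ℝ≥0∞) :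
    ∑' y, (q.map h) y * J y = ∑' w, q w * J (h w) := by
  simp only [PMF.map_apply]
  rw [tsum_congr (fun y => (ENNReal.tsum_mul_right (a := J y)).symm), ENNReal.tsum_comm]
  refine tsum_congr fun w => ?_
  rw [tsum_eq_single (h w) (by intro y hy; rw [if_neg hy, zero_mul])]
  rw [if_pos rfl]

lemma expect_zero (π : ℕ → X → U) (x : X) (J : X → ℝ≥0∞) : S.expect π x 0 J = J x := by
  show ∑' z, (PMF.pure x) z * J z = J x
  rw [tsum_eq_single x (by intro y hy; simp [PMF.pure_apply, hy])]
  simp [PMF.pure_apply]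

lemma expect_succ (π : ℕ → X → U) (x : X) (k : ℕ) (J : X → ℝ≥0∞) :
    S.expect π x (k+1) J
      = S.expect π x k (fun z => ∑' w, S.P z (π k z) w * J (S.f z (π k z) w)) := by
  show ∑' y, ((S.stateDist π x k).bind fun z => (S.P z (π k z)).map (S.f z (π k z))) y * J y = _
  simp only [PMF.bind_apply]
  rw [tsum_congr (fun y => (ENNReal.tsum_mul_right (a := J y)).symm), ENNReal.tsum_comm]
  refine tsum_congr fun z => ?_
  rw [tsum_congr (fun y => mul_assoc _ _ _), ENNReal.tsum_mul_left,
    tsum_pmf_map_mul (S.P z (π k z)) (S.f z (π k z)) J]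

lemma expect_mono (π : ℕ → X → U) (x : X) (k : ℕ) {J J' : X → ℝ≥0∞} (h : ∀ z, J z ≤ J' z) :
    S.expect π x k J ≤ S.expect π x k J' :=
  ENNReal.tsum_le_tsum (fun z => mul_le_mul_right (h z) _)

lemma expect_add (π : ℕ → X → U) (x : X) (k : ℕ) (J J' : X → ℝ≥0∞) :
    S.expect π x k (fun z => J z + J' z) = S.expect π x k J + S.expect π x k J' := by
  show ∑' z, S.stateDist π x k z * (J z + J' z)
      = (∑' z, S.stateDist π x k z * J z) + ∑' z, S.stateDist π x k z * J' z
  rw [← ENNReal.tsum_add]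
  exact tsum_congr fun z => mul_add _ _ _

lemma expect_const (π : ℕ → X → U) (x : X) (k : ℕ) (c : ℝ≥0∞) :
    S.expect π x k (fun _ => c) = c := by
  show ∑' z, S.stateDist π x k z * c = c
  rw [ENNReal.tsum_mul_right, PMF.tsum_coe, one_mul]

lemma expect_mul_const (π : ℕ → X → U) (x : X) (k : ℕ) (c : ℝ≥0∞) (J : X → ℝ≥0∞) :
    S.expect π x k (fun z => c * J z) = c * S.expect π x k J := by
  show ∑' z, S.stateDist π x k z * (c * J z) = c * ∑' z, S.stateDist π x k z * J z
  rw [← ENNReal.tsum_mul_left]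
  exact tsum_congr fun z => mul_left_comm _ _ _

lemma Q_split (J : X → ℝ≥0∞) (x : X) (u : U) :
    S.Q J x u = (∑' w, S.P x u w * S.g x u w) + ∑' w, S.P x u w * J (S.f x u w) := by
  rw [← ENNReal.tsum_add]
  exact tsum_congr fun w => mul_add _ _ _

lemma Q_mono {J J' : X → ℝ≥0∞} (h : ∀ z, J z ≤ J' z) (x : X) (u : U) :
    S.Q J x u ≤ S.Q J' x u :=
  ENNReal.tsum_le_tsum (fun w => mul_le_mul_right (add_le_add_right (h _) _) _)

lemma bellman_le_Q (J : X → ℝ≥0∞) {x : X} {u : U} (hu : u ∈ S.Uc x) :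
    S.bellman J x ≤ S.Q J x u := iInf₂_le u hu

lemma bellman_mono {J J' : X → ℝ≥0∞} (h : ∀ z, J z ≤ J' z) (x : X) :
    S.bellman J x ≤ S.bellman J' x :=
  iInf_mono fun u => iInf_mono' fun hu => ⟨hu, S.Q_mono h x u⟩

lemma expect_Q (π : ℕ → X → U) (x : X) (n : ℕ) (J : X → ℝ≥0∞) :
    S.expect π x n (fun z => S.Q J z (π n z))
      = S.stageCost π x n + S.expect π x (n+1) J := by
  have hfe : (fun z => S.Q J z (π n z))
      = fun z => (∑' w, S.P z (π n z) w * S.g z (π n z) w)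
        + ∑' w, S.P z (π n z) w * J (S.f z (π n z) w) :=
    funext fun z => S.Q_split J z (π n z)
  rw [hfe, S.expect_add, S.expect_succ]
  rfl

lemma expect_decomp (π : ℕ → X → U) (x : X) (n : ℕ) :
    ∀ (m : ℕ) (J : X → ℝ≥0∞), S.expect π x (n+m) J
      = ∑' z, S.stateDist π x n z * S.expect (tail π n) z m J := by
  intro m
  induction m with
  | zero =>
      intro J
      simp only [Nat.add_zero]
      exact tsum_congr fun z => by rw [S.expect_zero (tail π n) z J]
  | succ m ih =>
      intro J
      have h1 : n + (m+1) = (n+m) + 1 := rfl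
      rw [h1, S.expect_succ, ih]
      refine tsum_congr fun z => ?_
      rw [S.expect_succ (tail π n) z m J]
      rfl

lemma stageCost_decomp (π : ℕ → X → U) (x : X) (n m : ℕ) :
    S.stageCost π x (n+m) = ∑' z, S.stateDist π x n z * S.stageCost (tail π n) z m :=
  S.expect_decomp π x n m _

lemma r_decomp (π : ℕ → X → U) (x : X) (n m : ℕ) :
    S.r π x (n+m) = ∑' z, S.stateDist π x n z * S.r (tail π n) z m :=
  S.expect_decomp π x n m _

lemma tsum_Jcost_tail (π : ℕ → X → U) (x : X) (n : ℕ) :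
    ∑' z, S.stateDist π x n z * S.Jcost (tail π n) z = ∑' m, S.stageCost π x (n+m) :=
  calc ∑' z, S.stateDist π x n z * S.Jcost (tail π n) z
      = ∑' z, ∑' m, S.stateDist π x n z * S.stageCost (tail π n) z m :=
        tsum_congr fun z => (ENNReal.tsum_mul_left).symm
    _ = ∑' m, ∑' z, S.stateDist π x n z * S.stageCost (tail π n) z m := ENNReal.tsum_comm
    _ = ∑' m, S.stageCost π x (n+m) := tsum_congr fun m => (S.stageCost_decomp π x n m).symm

lemma tsum_N_tail (π : ℕ → X → U) (x : X) (n : ℕ) :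
    ∑' z, S.stateDist π x n z * S.N (tail π n) z = ∑' m, S.r π x (n+m) :=
  calc ∑' z, S.stateDist π x n z * S.N (tail π n) z
      = ∑' z, ∑' m, S.stateDist π x n z * S.r (tail π n) z m :=
        tsum_congr fun z => (ENNReal.tsum_mul_left).symm
    _ = ∑' m, ∑' z, S.stateDist π x n z * S.r (tail π n) z m := ENNReal.tsum_comm
    _ = ∑' m, S.r π x (n+m) := tsum_congr fun m => (S.r_decomp π x n m).symm

lemma isPolicy_tail {π : ℕ → X → U} (hπ : S.IsPolicy π) (n : ℕ) : S.IsPolicy (tail π n) :=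
  fun m x => hπ (n+m) x

lemma mem_Xhat {π : ℕ → X → U} {x : X} (hπ : S.ProperAt π x) (n : ℕ) {z : X}
    (hz : S.stateDist π x n z ≠ 0) : z ∈ S.Xhat := by
  obtain ⟨hpol, hJc, hN⟩ := hπ
  have hcost : S.stateDist π x n z * S.Jcost (tail π n) z ≤ S.Jcost π x :=
    calc S.stateDist π x n z * S.Jcost (tail π n) z
        ≤ ∑' z, S.stateDist π x n z * S.Jcost (tail π n) z := ENNReal.le_tsum z
      _ = ∑' m, S.stageCost π x (n+m) := S.tsum_Jcost_tail π x n
      _ ≤ ∑' k, S.stageCost π x k :=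
          ENNReal.tsum_comp_le_tsum_of_injective (add_right_injective n) _
  have hNz : S.stateDist π x n z * S.N (tail π n) z ≤ S.N π x :=
    calc S.stateDist π x n z * S.N (tail π n) z
        ≤ ∑' z, S.stateDist π x n z * S.N (tail π n) z := ENNReal.le_tsum z
      _ = ∑' m, S.r π x (n+m) := S.tsum_N_tail π x n
      _ ≤ ∑' k, S.r π x k :=
          ENNReal.tsum_comp_le_tsum_of_injective (add_right_injective n) _
  have h1 : S.Jcost (tail π n) z < ⊤ := lt_top_of_mul_le' hz hcost hJc
  have h2 : S.N (tail π n) z < ⊤ := lt_top_of_mul_le' hz hNz hN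
  have hp : (tail π n) ∈ {π' | S.ProperAt π' z} := ⟨S.isPolicy_tail hpol n, h1, h2⟩
  have hle : S.Jhat z ≤ S.Jcost (tail π n) z := iInf₂_le (tail π n) hp
  exact lt_of_le_of_lt hle h1

lemma expect_t {π : ℕ → X → U} (hπ : S.IsPolicy π) :
    ∀ (k : ℕ) (J : X → ℝ≥0∞), S.expect π S.t k J = J S.t := by
  intro k
  induction k with
  | zero => intro J; exact S.expect_zero π S.t J
  | succ k ih =>
      intro J
      rw [S.expect_succ, ih]
      have hab : ∀ w, S.f S.t (π k S.t) w = S.t := S.f_absorb _ (hπ k S.t)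
      calc ∑' w, S.P S.t (π k S.t) w * J (S.f S.t (π k S.t) w)
          = ∑' w, S.P S.t (π k S.t) w * J S.t := tsum_congr fun w => by rw [hab w]
        _ = J S.t := by rw [ENNReal.tsum_mul_right, PMF.tsum_coe, one_mul]

lemma stageCost_t {π : ℕ → X → U} (hπ : S.IsPolicy π) (k : ℕ) : S.stageCost π S.t k = 0 := by
  show S.expect π S.t k _ = 0
  rw [S.expect_t hπ]
  have : ∀ w, S.g S.t (π k S.t) w = 0 := S.g_zero _ (hπ k S.t)
  simp [this]

lemma Jcost_t {π : ℕ → X → U} (hπ : S.IsPolicy π) : S.Jcost π S.t = 0 := by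
  show ∑' k, S.stageCost π S.t k = 0
  simp [S.stageCost_t hπ]

lemma exists_isPolicy : ∃ π : ℕ → X → U, S.IsPolicy π :=
  ⟨fun _ x => (S.Uc_nonempty x).some, fun _ x => (S.Uc_nonempty x).some_mem⟩

lemma Jstar_le {π : ℕ → X → U} (hπ : S.IsPolicy π) (x : X) : S.Jstar x ≤ S.Jcost π x :=
  iInf₂_le π hπ

lemma Jstar_t : S.Jstar S.t = 0 := by
  obtain ⟨π, hπ⟩ := S.exists_isPolicy
  exact le_antisymm ((S.Jstar_le hπ _).trans (S.Jcost_t hπ).le) zero_le'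

lemma Jcost_le_mul_N {b : ℝ≥0∞} (hble : ∀ x u w, S.g x u w ≤ b) {π : ℕ → X → U}
    (hπ : S.IsPolicy π) (x : X) : S.Jcost π x ≤ b * S.N π x := by
  have hk : ∀ k, S.stageCost π x k ≤ b * S.r π x k := by
    intro k
    have hpt : ∀ z, (∑' w, S.P z (π k z) w * S.g z (π k z) w)
        ≤ b * (if z = S.t then 0 else 1) := by
      intro z
      by_cases hz : z = S.t
      · subst hz; simp [S.g_zero _ (hπ k S.t)]
      · rw [if_neg hz, mul_one]
        calc ∑' w, S.P z (π k z) w * S.g z (π k z) w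
            ≤ ∑' w, S.P z (π k z) w * b :=
              ENNReal.tsum_le_tsum (fun w => mul_le_mul_right (hble _ _ _) _)
          _ = b := by rw [ENNReal.tsum_mul_right, PMF.tsum_coe, one_mul]
    calc S.stageCost π x k
        ≤ S.expect π x k (fun z => b * (if z = S.t then 0 else 1)) :=
          S.expect_mono π x k hpt
      _ = b * S.r π x k := S.expect_mul_const π x k b _
  calc S.Jcost π x ≤ ∑' k, b * S.r π x k :=
      ENNReal.tsum_le_tsum hk
    _ = b * S.N π x := ENNReal.tsum_mul_left

lemma Jcost_eq_Q (π : ℕ → X → U) (x : X) :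
    S.Jcost π x = S.Q (S.Jcost (tail π 1)) x (π 0 x) := by
  rw [S.Q_split]
  have h0 : S.stageCost π x 0 = ∑' w, S.P x (π 0 x) w * S.g x (π 0 x) w := by
    show S.expect π x 0 _ = _
    rw [S.expect_zero]
  have h1 : ∑' (m : ℕ), S.stageCost π x (1+m)
      = ∑' w, S.P x (π 0 x) w * S.Jcost (tail π 1) (S.f x (π 0 x) w) := by
    rw [← S.tsum_Jcost_tail π x 1]
    have hd : S.stateDist π x 1 = (S.P x (π 0 x)).map (S.f x (π 0 x)) := by
      show (PMF.pure x).bind _ = _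
      rw [PMF.pure_bind]
    rw [hd, tsum_pmf_map_mul]
  calc S.Jcost π x = S.stageCost π x 0 + ∑' m, S.stageCost π x (m+1) :=
      tsum_eq_zero_add' ENNReal.summable
    _ = _ := by
      have h1' : ∑' (m : ℕ), S.stageCost π x (m+1) = ∑' (m : ℕ), S.stageCost π x (1+m) :=
        tsum_congr fun m => by rw [Nat.add_comm]
      rw [h0, h1', h1]

lemma bellman_Jstar_le (x : X) : S.bellman S.Jstar x ≤ S.Jstar x := by
  refine le_iInf₂ fun π hπ => ?_
  have hπ' : S.IsPolicy π := hπ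
  refine (S.bellman_le_Q _ (hπ' 0 x)).trans ?_
  rw [S.Jcost_eq_Q π x]
  exact S.Q_mono (fun z => S.Jstar_le (S.isPolicy_tail hπ' 1) z) x (π 0 x)

lemma Jstar_le_of_bellman_le (J : X → ℝ≥0∞) (h : ∀ x, S.bellman J x ≤ J x) (x : X) :
    S.Jstar x ≤ J x := by
  refine ENNReal.le_of_forall_pos_le_add fun ε hε _ => ?_
  set e : ℕ → ℝ≥0∞ := fun k => (ε : ℝ≥0∞) * 2⁻¹ ^ (k+1) with he
  have he0 : ∀ k, e k ≠ 0 := fun k =>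
    mul_ne_zero (ENNReal.coe_ne_zero.2 hε.ne')
      (pow_ne_zero _ (ENNReal.inv_ne_zero.2 ENNReal.ofNat_ne_top))
  have hek : ∀ k, e k = (ε : ℝ≥0∞) * 2⁻¹ ^ (k+1) := fun k => rfl
  have hesum : ∀ n, (∑ k ∈ Finset.range n, e k) + (ε : ℝ≥0∞) * 2⁻¹ ^ n = (ε : ℝ≥0∞) := by
    intro n
    induction n with
    | zero => simp
    | succ n ih =>
        have h2 : (2 : ℝ≥0∞)⁻¹ ^ (n+1) + 2⁻¹ ^ (n+1) = 2⁻¹ ^ n := by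
          rw [pow_succ, ← mul_add, ENNReal.inv_two_add_inv_two, mul_one]
        calc (∑ k ∈ Finset.range (n+1), e k) + (ε : ℝ≥0∞) * 2⁻¹ ^ (n+1)
            = (∑ k ∈ Finset.range n, e k)
              + ((ε : ℝ≥0∞) * 2⁻¹ ^ (n+1) + (ε : ℝ≥0∞) * 2⁻¹ ^ (n+1)) := by
              rw [Finset.sum_range_succ, hek n]; ring
          _ = (∑ k ∈ Finset.range n, e k) + (ε : ℝ≥0∞) * 2⁻¹ ^ n := by
              rw [← mul_add, h2]
          _ = (ε : ℝ≥0∞) := ih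
  have hch : ∀ (k : ℕ) (z : X), ∃ u, u ∈ S.Uc z ∧ S.Q J z u ≤ J z + e k := by
    intro k z
    by_cases hz : J z = ⊤
    · obtain ⟨u, hu⟩ := S.Uc_nonempty z
      exact ⟨u, hu, by rw [hz, top_add]; exact le_top⟩
    · have hlt : S.bellman J z < J z + e k :=
        (h z).trans_lt (ENNReal.lt_add_right hz (he0 k))
      obtain ⟨u, hu⟩ := iInf_lt_iff.1 hlt
      obtain ⟨hmem, hQ⟩ := iInf_lt_iff.1 hu
      exact ⟨u, hmem, hQ.le⟩
  choose φ hφ1 hφ2 using hch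
  have hpol : S.IsPolicy φ := fun k z => hφ1 k z
  have key : ∀ n, (∑ k ∈ Finset.range n, S.stageCost φ x k) + S.expect φ x n J
      ≤ J x + ∑ k ∈ Finset.range n, e k := by
    intro n
    induction n with
    | zero => simp [S.expect_zero]
    | succ n ih =>
        have h1 : S.expect φ x n (fun z => S.Q J z (φ n z))
            ≤ S.expect φ x n J + e n := by
          calc S.expect φ x n (fun z => S.Q J z (φ n z))
              ≤ S.expect φ x n (fun z => J z + e n) :=
                S.expect_mono φ x n (fun z => hφ2 n z)
            _ = S.expect φ x n J + e n := by rw [S.expect_add, S.expect_const]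
        calc (∑ k ∈ Finset.range (n+1), S.stageCost φ x k) + S.expect φ x (n+1) J
            = (∑ k ∈ Finset.range n, S.stageCost φ x k)
              + (S.stageCost φ x n + S.expect φ x (n+1) J) := by
              rw [Finset.sum_range_succ]; ring
          _ = (∑ k ∈ Finset.range n, S.stageCost φ x k)
              + S.expect φ x n (fun z => S.Q J z (φ n z)) := by rw [S.expect_Q]
          _ ≤ (∑ k ∈ Finset.range n, S.stageCost φ x k)
              + (S.expect φ x n J + e n) := add_le_add_right h1 _
          _ = ((∑ k ∈ Finset.range n, S.stageCost φ x k) + S.expect φ x n J) + e n := by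
              ring
          _ ≤ (J x + ∑ k ∈ Finset.range n, e k) + e n := add_le_add_left ih _
          _ = J x + ∑ k ∈ Finset.range (n+1), e k := by
              rw [Finset.sum_range_succ]; ring
  have hJc : S.Jcost φ x ≤ J x + ε := by
    show ∑' k, S.stageCost φ x k ≤ J x + (ε : ℝ≥0∞)
    rw [ENNReal.tsum_eq_iSup_nat]
    refine iSup_le fun n => ?_
    calc ∑ k ∈ Finset.range n, S.stageCost φ x k
        ≤ (∑ k ∈ Finset.range n, S.stageCost φ x k) + S.expect φ x n J := le_self_add
      _ ≤ J x + ∑ k ∈ Finset.range n, e k := key n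
      _ ≤ J x + (ε : ℝ≥0∞) := add_le_add_right ((hesum n) ▸ le_self_add) _
  exact (S.Jstar_le hpol x).trans hJc

lemma le_Jhat_of_bellman (J : X → ℝ≥0∞) (ht : J S.t = 0)
    (hM : (⨆ x ∈ S.Xhat, J x) < ⊤) (h : ∀ x, J x ≤ S.bellman J x) (x : X) :
    J x ≤ S.Jhat x := by
  refine le_iInf₂ fun π hπ => ?_
  have hπ' : S.ProperAt π x := hπ
  obtain ⟨hpol, hJc, hN⟩ := hπ'
  have hπ'' : S.ProperAt π x := ⟨hpol, hJc, hN⟩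
  set M := ⨆ x ∈ S.Xhat, J x with hMdef
  have key : ∀ n, J x ≤ (∑ k ∈ Finset.range n, S.stageCost π x k) + S.expect π x n J := by
    intro n
    induction n with
    | zero => simp [S.expect_zero]
    | succ n ih =>
        refine ih.trans ?_
        have h1 : S.expect π x n J ≤ S.expect π x n (fun z => S.Q J z (π n z)) :=
          S.expect_mono π x n (fun z => (h z).trans (S.bellman_le_Q J (hpol n z)))
        calc (∑ k ∈ Finset.range n, S.stageCost π x k) + S.expect π x n J
            ≤ (∑ k ∈ Finset.range n, S.stageCost π x k)
              + S.expect π x n (fun z => S.Q J z (π n z)) := add_le_add_right h1 _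
          _ = (∑ k ∈ Finset.range (n+1), S.stageCost π x k) + S.expect π x (n+1) J := by
              rw [S.expect_Q, Finset.sum_range_succ]; ring
  have hvan : ∀ n, S.expect π x n J ≤ M * S.r π x n := by
    intro n
    have hpt : ∀ z, S.stateDist π x n z * J z
        ≤ M * (S.stateDist π x n z * (if z = S.t then 0 else 1)) := by
      intro z
      by_cases hz : z = S.t
      · subst hz; simp [ht]
      · rw [if_neg hz, mul_one]
        by_cases hp : S.stateDist π x n z = 0
        · simp [hp]
        · have hXz : z ∈ S.Xhat := S.mem_Xhat hπ'' n hp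
          calc S.stateDist π x n z * J z ≤ S.stateDist π x n z * M :=
              mul_le_mul_right (le_biSup _ hXz) _
            _ = M * S.stateDist π x n z := mul_comm _ _
    calc S.expect π x n J
        ≤ ∑' z, M * (S.stateDist π x n z * (if z = S.t then 0 else 1)) :=
          ENNReal.tsum_le_tsum hpt
      _ = M * S.r π x n := ENNReal.tsum_mul_left
  refine ENNReal.le_of_forall_pos_le_add fun δ hδ _ => ?_
  have hex : ∃ n, M * S.r π x n ≤ (δ : ℝ≥0∞) := by
    by_cases hM0 : M = 0
    · exact ⟨0, by simp [hM0]⟩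
    · by_contra hcon
      push_neg at hcon
      have hge : ∀ n, (δ : ℝ≥0∞) / M ≤ S.r π x n := by
        intro n
        by_contra hlt
        push_neg at hlt
        exact (lt_iff_not_ge.1 (hcon n))
          ((mul_le_mul_right hlt.le M).trans_eq (ENNReal.mul_div_cancel' (fun h => absurd h hM0) (fun h => absurd h hM.ne)))
      have htop : S.N π x = ⊤ := by
        refine top_le_iff.1 ?_
        calc (⊤ : ℝ≥0∞) = ∑' (_ : ℕ), (δ : ℝ≥0∞) / M :=
            (ENNReal.tsum_const_eq_top_of_ne_zero
              (ENNReal.div_ne_zero.2 ⟨ENNReal.coe_ne_zero.2 hδ.ne', hM.ne⟩)).symm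
          _ ≤ ∑' n, S.r π x n := ENNReal.tsum_le_tsum hge
      exact hN.ne htop
  obtain ⟨n, hn⟩ := hex
  calc J x ≤ (∑ k ∈ Finset.range n, S.stageCost π x k) + S.expect π x n J := key n
    _ ≤ S.Jcost π x + M * S.r π x n := add_le_add (ENNReal.sum_le_tsum _) (hvan n)
    _ ≤ S.Jcost π x + (δ : ℝ≥0∞) := add_le_add_right hn _

end SSP

/-- If `g` is bounded, there exists a uniformly proper policy, and
`Ĵ = J*`, then `J*` is the unique solution of Bellman's equation within `B`. -/
theorem Jstar_unique_in_Bset {X U W : Type*} [Countable W] (S : SSP X U W)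
    (hb : S.BoundedCost) (hup : ∃ π : ℕ → X → U, S.UniformlyProper π)
    (heq : S.Jhat = S.Jstar) :
    S.Jstar ∈ S.Bset ∧ (∀ x, S.Jstar x = S.bellman S.Jstar x) ∧
    ∀ J ∈ S.Bset, (∀ x, J x = S.bellman J x) → J = S.Jstar := by
  obtain ⟨b, hbt, hble⟩ := hb
  obtain ⟨pb, hpol, hNb⟩ := hup
  -- Part 1 : J* ∈ B
  have hJt : S.Jstar S.t = 0 := S.Jstar_t
  have hsup : (⨆ x ∈ S.Xhat, S.Jstar x) < ⊤ := by
    refine lt_of_le_of_lt (iSup₂_le fun x hx => ?_)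
      (ENNReal.mul_lt_top hbt hNb)
    calc S.Jstar x ≤ S.Jcost pb x := S.Jstar_le hpol x
      _ ≤ b * S.N pb x := S.Jcost_le_mul_N hble hpol x
      _ ≤ b * ⨆ x ∈ S.Xhat, S.N pb x := mul_le_mul_right (le_biSup _ hx) b
  have hmemB : S.Jstar ∈ S.Bset := ⟨hJt, hsup⟩
  -- The least fixed point of the Bellman operator
  let T : (X → ℝ≥0∞) →o (X → ℝ≥0∞) :=
    ⟨fun J => S.bellman J, fun J J' hJJ x => S.bellman_mono (fun z => hJJ z) x⟩
  set V := OrderHom.lfp T with hV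
  have hVfix : ∀ x, S.bellman V x = V x := fun x => congrFun (OrderHom.map_lfp T) x
  have hVle : ∀ x, V x ≤ S.Jstar x :=
    fun x => OrderHom.lfp_le T (fun y => S.bellman_Jstar_le y) x
  have hVt : V S.t = 0 := le_antisymm ((hVle S.t).trans hJt.le) zero_le'
  have hVsup : (⨆ x ∈ S.Xhat, V x) < ⊤ :=
    lt_of_le_of_lt (iSup₂_le fun x hx => (hVle x).trans (le_biSup _ hx)) hsup
  have h1 : ∀ x, S.Jstar x ≤ V x :=
    S.Jstar_le_of_bellman_le V (fun x => (hVfix x).le)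
  have h2 : ∀ x, V x ≤ S.Jhat x :=
    S.le_Jhat_of_bellman V hVt hVsup (fun x => (hVfix x).ge)
  have hVeq : V = S.Jstar :=
    funext fun x => le_antisymm ((h2 x).trans_eq (congrFun heq x)) (h1 x)
  refine ⟨hmemB, fun x => ?_, fun J hJB hJfix => ?_⟩
  · have := hVfix x
    rw [hVeq] at this
    exact this.symm
  · have ha : ∀ x, S.Jstar x ≤ J x :=
      S.Jstar_le_of_bellman_le J (fun x => (hJfix x).ge)
    have hbb : ∀ x, J x ≤ S.Jhat x :=
      S.le_Jhat_of_bellman J hJB.1 hJB.2 (fun x => (hJfix x).le)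
    exact funext fun x => le_antisymm ((hbb x).trans_eq (congrFun heq x)) (ha x)
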